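/- Let 𝒰 be a Unique Games instance over alphabet [Q] on a finite multigraph G=(V,E) with no isolated vertices, and let L,L' be reals with 1 ≤ L ≤ L'. Then for every seed s∈V and every seed label a∈[Q], Amb_{L'}(s,a) ≥ Amb_L(s,a); consequently μ^{UG}_{L'}(s) ≥ μ^{UG}_L(s). -/

import Mathlib

open scoped Classical
set_option linter.unusedSectionVars false
set_option linter.unusedVariables false

noncomputable section

/-- Degree of a vertex in a finite multigraph given by endpoint maps (with multiplicity). -/
def mdeg {V E : Type} [Fintype E] [DecidableEq V] (fste snde : E → V) (v : V) : ℕ :=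
  (Finset.univ.filter (fun e => fste e = v)).card +
    (Finset.univ.filter (fun e => snde e = v)).card

/-- The label-lifted lazy walk on `V × [Q]` (constraints stored oriented `fste → snde`). -/
def ugWalk {V E : Type} [Fintype V] [Fintype E] [DecidableEq V] {Q : ℕ}
    (fste snde : E → V) (perm : E → Equiv.Perm (Fin Q)) :
    Matrix (V × Fin Q) (V × Fin Q) ℝ :=
  Matrix.of fun p q =>
    (if q = p then (1 / 2 : ℝ) else 0) +
    ((Finset.univ.filter (fun e =>
        (fste e = p.1 ∧ snde e = q.1 ∧ perm e p.2 = q.2) ∨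
        (snde e = p.1 ∧ fste e = q.1 ∧ (perm e)⁻¹ p.2 = q.2))).card : ℝ) /
      (2 * (mdeg fste snde p.1 : ℝ))

/-- The geometric (Personalized PageRank) kernel at scale `L`. -/
def ugPr {V E : Type} [Fintype V] [Fintype E] [DecidableEq V] {Q : ℕ}
    (fste snde : E → V) (perm : E → Equiv.Perm (Fin Q)) (L : ℝ)
    (p q : V × Fin Q) : ℝ :=
  ∑' t : ℕ, (1 / (L + 1)) * (L / (L + 1)) ^ t * (ugWalk fste snde perm ^ t) p q

/-- Ambiguity of seed label `a` at seed `s` and scale `L`. -/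
def ugAmb {V E : Type} [Fintype V] [Fintype E] [DecidableEq V] {Q : ℕ}
    (fste snde : E → V) (perm : E → Equiv.Perm (Fin Q)) (L : ℝ) (s : V) (a : Fin Q) : ℝ :=
  ∑ v : V, ((∑ b : Fin Q, ugPr fste snde perm L (s, a) (v, b)) -
    ⨆ b : Fin Q, ugPr fste snde perm L (s, a) (v, b))

/-- `μ^{UG}_L(s) = min_{a∈[Q]} Amb_L(s,a)`. -/
def ugMu {V E : Type} [Fintype V] [Fintype E] [DecidableEq V] {Q : ℕ}
    (fste snde : E → V) (perm : E → Equiv.Perm (Fin Q)) (L : ℝ) (s : V) : ℝ :=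
  ⨅ a : Fin Q, ugAmb fste snde perm L s a

section Aux
variable {V E : Type} [Fintype V] [Fintype E] [DecidableEq V] {Q : ℕ}
variable {fste snde : E → V} {perm : E → Equiv.Perm (Fin Q)}

lemma ugWalk_nonneg (p q : V × Fin Q) : 0 ≤ ugWalk fste snde perm p q := by
  unfold ugWalk
  simp only [Matrix.of_apply]
  apply add_nonneg
  · split <;> norm_num
  · apply div_nonneg <;> positivity

lemma edge_row (hne : ∀ e, fste e ≠ snde e) (e : E) (p : V × Fin Q) (g : V × Fin Q → ℝ) :
    ∑ q : V × Fin Q, (if (fste e = p.1 ∧ snde e = q.1 ∧ perm e p.2 = q.2) ∨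
        (snde e = p.1 ∧ fste e = q.1 ∧ (perm e)⁻¹ p.2 = q.2) then g q else 0)
      = (if fste e = p.1 then g (snde e, perm e p.2) else 0)
      + (if snde e = p.1 then g (fste e, (perm e)⁻¹ p.2) else 0) := by
  by_cases h1 : fste e = p.1
  · have h2 : ¬ snde e = p.1 := fun h => hne e (h1.trans h.symm)
    have key : ∀ q : V × Fin Q,
        ((fste e = p.1 ∧ snde e = q.1 ∧ perm e p.2 = q.2) ∨
        (snde e = p.1 ∧ fste e = q.1 ∧ (perm e)⁻¹ p.2 = q.2)) ↔
        q = (snde e, perm e p.2) := by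
      intro q
      constructor
      · rintro (⟨-, h3, h4⟩ | ⟨h3, -⟩)
        · exact Prod.ext h3.symm h4.symm
        · exact absurd h3 h2
      · rintro rfl; exact Or.inl ⟨h1, rfl, rfl⟩
    simp only [key, Finset.sum_ite_eq', Finset.mem_univ, if_true]
    simp [h1, h2]
  · by_cases h2 : snde e = p.1
    · have key : ∀ q : V × Fin Q,
          ((fste e = p.1 ∧ snde e = q.1 ∧ perm e p.2 = q.2) ∨
          (snde e = p.1 ∧ fste e = q.1 ∧ (perm e)⁻¹ p.2 = q.2)) ↔
          q = (fste e, (perm e)⁻¹ p.2) := by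
        intro q
        constructor
        · rintro (⟨h3, -⟩ | ⟨-, h3, h4⟩)
          · exact absurd h3 h1
          · exact Prod.ext h3.symm h4.symm
        · rintro rfl; exact Or.inr ⟨h2, rfl, rfl⟩
      simp only [key, Finset.sum_ite_eq', Finset.mem_univ, if_true]
      simp [h1, h2]
    · simp [h1, h2]

lemma edge_col (hne : ∀ e, fste e ≠ snde e) (e : E) (q : V × Fin Q) (g : V × Fin Q → ℝ) :
    ∑ p : V × Fin Q, (if (fste e = p.1 ∧ snde e = q.1 ∧ perm e p.2 = q.2) ∨
        (snde e = p.1 ∧ fste e = q.1 ∧ (perm e)⁻¹ p.2 = q.2) then g p else 0)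
      = (if snde e = q.1 then g (fste e, (perm e)⁻¹ q.2) else 0)
      + (if fste e = q.1 then g (snde e, perm e q.2) else 0) := by
  by_cases h1 : snde e = q.1
  · have h2 : ¬ fste e = q.1 := fun h => hne e (h.trans h1.symm)
    have key : ∀ p : V × Fin Q,
        ((fste e = p.1 ∧ snde e = q.1 ∧ perm e p.2 = q.2) ∨
        (snde e = p.1 ∧ fste e = q.1 ∧ (perm e)⁻¹ p.2 = q.2)) ↔
        p = (fste e, (perm e)⁻¹ q.2) := by
      intro p
      constructor
      · rintro (⟨h3, -, h4⟩ | ⟨-, h3, -⟩)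
        · refine Prod.ext h3.symm ?_
          simp [← h4]
        · exact absurd h3 h2
      · rintro rfl; exact Or.inl ⟨rfl, h1, by simp⟩
    simp only [key, Finset.sum_ite_eq', Finset.mem_univ, if_true]
    simp [h1, h2]
  · by_cases h2 : fste e = q.1
    · have key : ∀ p : V × Fin Q,
          ((fste e = p.1 ∧ snde e = q.1 ∧ perm e p.2 = q.2) ∨
          (snde e = p.1 ∧ fste e = q.1 ∧ (perm e)⁻¹ p.2 = q.2)) ↔
          p = (snde e, perm e q.2) := by
        intro p
        constructor
        · rintro (⟨-, h3, -⟩ | ⟨h3, -, h4⟩)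
          · exact absurd h3 h1
          · refine Prod.ext h3.symm ?_
            simp [← h4]
        · rintro rfl; exact Or.inr ⟨rfl, h2, by simp⟩
      simp only [key, Finset.sum_ite_eq', Finset.mem_univ, if_true]
      simp [h1, h2]
    · simp [h1, h2]


lemma ugWalk_apply (p q : V × Fin Q) :
    ugWalk fste snde perm p q = (if q = p then (1 / 2 : ℝ) else 0) +
      ∑ e : E, (if (fste e = p.1 ∧ snde e = q.1 ∧ perm e p.2 = q.2) ∨
        (snde e = p.1 ∧ fste e = q.1 ∧ (perm e)⁻¹ p.2 = q.2) then
          (1 : ℝ) / (2 * (mdeg fste snde p.1 : ℝ)) else 0) := by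
  unfold ugWalk
  simp only [Matrix.of_apply]
  congr 1
  rw [Finset.card_filter]
  push_cast
  rw [Finset.sum_div]
  refine Finset.sum_congr rfl fun e _ => ?_
  split <;> simp

lemma ugWalk_rowsum (hne : ∀ e, fste e ≠ snde e)
    (hdeg : ∀ v, 0 < mdeg fste snde v) (p : V × Fin Q) :
    ∑ q : V × Fin Q, ugWalk fste snde perm p q = 1 := by
  have hd : (0 : ℝ) < (mdeg fste snde p.1 : ℝ) := by exact_mod_cast hdeg p.1
  simp only [ugWalk_apply, Finset.sum_add_distrib]
  rw [Finset.sum_ite_eq' Finset.univ p (fun _ => (1 / 2 : ℝ))]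
  rw [Finset.sum_comm]
  have : ∀ e : E, ∑ q : V × Fin Q, (if (fste e = p.1 ∧ snde e = q.1 ∧ perm e p.2 = q.2) ∨
        (snde e = p.1 ∧ fste e = q.1 ∧ (perm e)⁻¹ p.2 = q.2) then
          (1 : ℝ) / (2 * (mdeg fste snde p.1 : ℝ)) else 0)
      = (if fste e = p.1 then (1 : ℝ) / (2 * (mdeg fste snde p.1 : ℝ)) else 0)
      + (if snde e = p.1 then (1 : ℝ) / (2 * (mdeg fste snde p.1 : ℝ)) else 0) := by
    intro e
    exact edge_row hne e p (fun _ => (1 : ℝ) / (2 * (mdeg fste snde p.1 : ℝ)))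
  rw [Finset.sum_congr rfl fun e _ => this e]
  rw [Finset.sum_add_distrib]
  rw [← Finset.sum_filter, ← Finset.sum_filter]
  simp only [Finset.sum_const, nsmul_eq_mul]
  have hm : ((Finset.univ.filter (fun e => fste e = p.1)).card : ℝ)
      + ((Finset.univ.filter (fun e => snde e = p.1)).card : ℝ)
      = (mdeg fste snde p.1 : ℝ) := by
    unfold mdeg; push_cast; ring
  simp only [Finset.mem_univ, if_true]
  field_simp
  linarith [hm]

lemma ugWalk_pow_nonneg (t : ℕ) (p q : V × Fin Q) :
    0 ≤ (ugWalk fste snde perm ^ t) p q := by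
  induction t generalizing p q with
  | zero => simp [Matrix.one_apply]; split <;> norm_num
  | succ n ih =>
      rw [pow_succ, Matrix.mul_apply]
      exact Finset.sum_nonneg fun r _ => mul_nonneg (ih p r) (ugWalk_nonneg r q)

lemma ugWalk_pow_rowsum (hne : ∀ e, fste e ≠ snde e)
    (hdeg : ∀ v, 0 < mdeg fste snde v) (t : ℕ) (p : V × Fin Q) :
    ∑ q : V × Fin Q, (ugWalk fste snde perm ^ t) p q = 1 := by
  induction t generalizing p with
  | zero => simp [Matrix.one_apply]
  | succ n ih =>
      simp only [pow_succ, Matrix.mul_apply]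
      rw [Finset.sum_comm]
      have : ∀ r : V × Fin Q, ∑ q : V × Fin Q,
          (ugWalk fste snde perm ^ n) p r * ugWalk fste snde perm r q
          = (ugWalk fste snde perm ^ n) p r := by
        intro r
        rw [← Finset.mul_sum, ugWalk_rowsum hne hdeg, mul_one]
      rw [Finset.sum_congr rfl fun r _ => this r, ih]

lemma ugWalk_pow_le_one (hne : ∀ e, fste e ≠ snde e)
    (hdeg : ∀ v, 0 < mdeg fste snde v) (t : ℕ) (p q : V × Fin Q) :
    (ugWalk fste snde perm ^ t) p q ≤ 1 := by
  rw [← ugWalk_pow_rowsum hne hdeg t p]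
  exact Finset.single_le_sum (fun r _ => ugWalk_pow_nonneg t p r) (Finset.mem_univ q)


lemma phi_step (hne : ∀ e, fste e ≠ snde e) (hdeg : ∀ v, 0 < mdeg fste snde v)
    (hQ : 0 < Q) (ρ : V × Fin Q → ℝ) (hρ : ∀ r, 0 ≤ ρ r) :
    ∑ v : V, ⨆ b : Fin Q, (∑ r : V × Fin Q, ρ r * ugWalk fste snde perm r (v, b))
      ≤ ∑ v : V, ⨆ b : Fin Q, ρ (v, b) := by
  haveI : Nonempty (Fin Q) := ⟨⟨0, hQ⟩⟩
  have hd : ∀ u : V, (0 : ℝ) < 2 * (mdeg fste snde u : ℝ) := by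
    intro u
    have := hdeg u
    have : (0 : ℝ) < (mdeg fste snde u : ℝ) := by exact_mod_cast this
    linarith
  set S : V → ℝ := fun u => ⨆ c : Fin Q, ρ (u, c) with hSdef
  have hS : ∀ u c, ρ (u, c) ≤ S u := fun u c =>
    le_ciSup (f := fun c : Fin Q => ρ (u, c))
      (Set.Finite.bddAbove (Set.finite_range _)) c
  set T : E → V → ℝ := fun e v =>
    (if snde e = v then S (fste e) / (2 * (mdeg fste snde (fste e) : ℝ)) else 0)
    + (if fste e = v then S (snde e) / (2 * (mdeg fste snde (snde e) : ℝ)) else 0) with hT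
  have step1 : ∀ v b, (∑ r : V × Fin Q, ρ r * ugWalk fste snde perm r (v, b))
      ≤ ρ (v, b) / 2 + ∑ e : E, T e v := by
    intro v b
    have expand : (∑ r : V × Fin Q, ρ r * ugWalk fste snde perm r (v, b))
        = ρ (v, b) * (1 / 2) + ∑ e : E, ∑ r : V × Fin Q,
            (if (fste e = r.1 ∧ snde e = (v, b).1 ∧ perm e r.2 = (v, b).2) ∨
              (snde e = r.1 ∧ fste e = (v, b).1 ∧ (perm e)⁻¹ r.2 = (v, b).2) then
              ρ r / (2 * (mdeg fste snde r.1 : ℝ)) else 0) := by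
      rw [← Finset.sum_comm]
      have : ∀ r : V × Fin Q, ρ r * ugWalk fste snde perm r (v, b)
          = (if (v, b) = r then ρ r * (1 / 2) else 0) + ∑ e : E,
            (if (fste e = r.1 ∧ snde e = (v, b).1 ∧ perm e r.2 = (v, b).2) ∨
              (snde e = r.1 ∧ fste e = (v, b).1 ∧ (perm e)⁻¹ r.2 = (v, b).2) then
              ρ r / (2 * (mdeg fste snde r.1 : ℝ)) else 0) := by
        intro r
        rw [ugWalk_apply, mul_add, Finset.mul_sum]
        congr 1
        · split <;> simp
        · refine Finset.sum_congr rfl fun e _ => ?_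
          split <;> ring
      rw [Finset.sum_congr rfl fun r _ => this r, Finset.sum_add_distrib,
        Finset.sum_ite_eq Finset.univ ((v, b) : V × Fin Q) (fun r => ρ r * (1 / 2))]
      simp
    rw [expand]
    have hhalf : ρ (v, b) * (1 / 2) = ρ (v, b) / 2 := by ring
    rw [hhalf]
    refine add_le_add_right (Finset.sum_le_sum fun e _ => ?_) _
    rw [edge_col hne e ((v, b) : V × Fin Q)
      (fun r => ρ r / (2 * (mdeg fste snde r.1 : ℝ)))]
    refine add_le_add ?_ ?_
    · dsimp only
      split
      · exact div_le_div_of_nonneg_right (hS _ _) (hd _).le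
      · exact le_refl 0
    · dsimp only
      split
      · exact div_le_div_of_nonneg_right (hS _ _) (hd _).le
      · exact le_refl 0
  have step2 : ∀ v : V, (⨆ b : Fin Q, ∑ r : V × Fin Q, ρ r * ugWalk fste snde perm r (v, b))
      ≤ S v / 2 + ∑ e : E, T e v := by
    intro v
    refine ciSup_le fun b => (step1 v b).trans (add_le_add_left ?_ _)
    exact div_le_div_of_nonneg_right (hS v b) (by norm_num)
  calc ∑ v : V, ⨆ b : Fin Q, (∑ r : V × Fin Q, ρ r * ugWalk fste snde perm r (v, b))
      ≤ ∑ v : V, (S v / 2 + ∑ e : E, T e v) := Finset.sum_le_sum fun v _ => step2 v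
    _ = ∑ v : V, S v := by
        rw [Finset.sum_add_distrib, Finset.sum_comm]
        have hTe : ∀ e : E, ∑ v : V, T e v
            = S (fste e) / (2 * (mdeg fste snde (fste e) : ℝ))
            + S (snde e) / (2 * (mdeg fste snde (snde e) : ℝ)) := by
          intro e
          rw [hT]
          rw [Finset.sum_add_distrib,
            Finset.sum_ite_eq Finset.univ (snde e) (fun _ => S (fste e) / (2 * (mdeg fste snde (fste e) : ℝ))),
            Finset.sum_ite_eq Finset.univ (fste e) (fun _ => S (snde e) / (2 * (mdeg fste snde (snde e) : ℝ)))]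
          simp [add_comm]
        rw [Finset.sum_congr rfl fun e _ => hTe e]
        set f : V → ℝ := fun u => S u / (2 * (mdeg fste snde u : ℝ)) with hf
        have h1 : ∑ e : E, f (fste e)
            = ∑ u : V, ((Finset.univ.filter (fun e => fste e = u)).card : ℝ) * f u := by
          rw [← Finset.sum_fiberwise Finset.univ fste (fun e => f (fste e))]
          refine Finset.sum_congr rfl fun u _ => ?_
          rw [Finset.sum_congr rfl fun e he => by
            rw [(Finset.mem_filter.mp he).2]]
          simp [mul_comm]
        have h2 : ∑ e : E, f (snde e)
            = ∑ u : V, ((Finset.univ.filter (fun e => snde e = u)).card : ℝ) * f u := by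
          rw [← Finset.sum_fiberwise Finset.univ snde (fun e => f (snde e))]
          refine Finset.sum_congr rfl fun u _ => ?_
          rw [Finset.sum_congr rfl fun e he => by
            rw [(Finset.mem_filter.mp he).2]]
          simp [mul_comm]
        rw [Finset.sum_add_distrib, h1, h2, ← Finset.sum_add_distrib, ← Finset.sum_add_distrib]
        refine Finset.sum_congr rfl fun u _ => ?_
        have hcast : ((Finset.univ.filter (fun e => fste e = u)).card : ℝ)
            + ((Finset.univ.filter (fun e => snde e = u)).card : ℝ)
            = (mdeg fste snde u : ℝ) := by unfold mdeg; push_cast; ring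
        have hdu : (mdeg fste snde u : ℝ) ≠ 0 := by
          have := hdeg u; positivity
        have hcomb : ((Finset.univ.filter (fun e => fste e = u)).card : ℝ) * f u
            + ((Finset.univ.filter (fun e => snde e = u)).card : ℝ) * f u
            = (mdeg fste snde u : ℝ) * f u := by rw [← add_mul, hcast]
        rw [hcomb, hf]
        field_simp
        ring


lemma summable_prTerm (hne : ∀ e, fste e ≠ snde e) (hdeg : ∀ v, 0 < mdeg fste snde v) {L : ℝ} (hL : 1 ≤ L) (p q : V × Fin Q) :
    Summable fun t : ℕ =>
      (1 / (L + 1)) * (L / (L + 1)) ^ t * (ugWalk fste snde perm ^ t) p q := by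
  have h0 : (0 : ℝ) < L + 1 := by linarith
  have hl0 : 0 ≤ L / (L + 1) := by positivity
  have hl1 : L / (L + 1) < 1 := by rw [div_lt_one h0]; linarith
  refine Summable.of_nonneg_of_le (fun t => ?_) (fun t => ?_)
    (((summable_geometric_of_lt_one hl0 hl1).mul_left (1 / (L + 1))))
  · have := ugWalk_pow_nonneg (fste := fste) (snde := snde) (perm := perm) t p q
    positivity
  · calc (1 / (L + 1)) * (L / (L + 1)) ^ t * (ugWalk fste snde perm ^ t) p q
        ≤ (1 / (L + 1)) * (L / (L + 1)) ^ t * 1 := by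
          refine mul_le_mul_of_nonneg_left (ugWalk_pow_le_one hne hdeg t p q) ?_
          positivity
      _ = (1 / (L + 1)) * (L / (L + 1)) ^ t := mul_one _

lemma pr_nonneg {L : ℝ} (hL : 1 ≤ L) (p q : V × Fin Q) :
    0 ≤ ugPr fste snde perm L p q := by
  have h0 : (0 : ℝ) < L + 1 := by linarith
  refine tsum_nonneg fun t => ?_
  have := ugWalk_pow_nonneg (fste := fste) (snde := snde) (perm := perm) t p q
  positivity

lemma pr_rowsum (hne : ∀ e, fste e ≠ snde e) (hdeg : ∀ v, 0 < mdeg fste snde v) {L : ℝ} (hL : 1 ≤ L) (p : V × Fin Q) :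
    ∑ q : V × Fin Q, ugPr fste snde perm L p q = 1 := by
  have h0 : (0 : ℝ) < L + 1 := by linarith
  have hl0 : 0 ≤ L / (L + 1) := by positivity
  have hl1 : L / (L + 1) < 1 := by rw [div_lt_one h0]; linarith
  unfold ugPr
  rw [← Summable.tsum_finsetSum (fun q _ => summable_prTerm hne hdeg hL p q)]
  have hsum : ∀ t : ℕ, ∑ q : V × Fin Q,
      (1 / (L + 1)) * (L / (L + 1)) ^ t * (ugWalk fste snde perm ^ t) p q
      = (1 / (L + 1)) * (L / (L + 1)) ^ t := by
    intro t
    rw [← Finset.mul_sum, ugWalk_pow_rowsum hne hdeg, mul_one]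
  rw [tsum_congr hsum, tsum_mul_left, tsum_geometric_of_lt_one hl0 hl1]
  have : 1 - L / (L + 1) = 1 / (L + 1) := by field_simp; ring
  rw [this]
  field_simp


end Aux

/-- Coefficients expressing `pr_{L'}` as a convex combination of `pr_L · M^k`. -/
def cSeq (L L' : ℝ) (k : ℕ) : ℝ :=
  if k = 0 then (L + 1) / (L' + 1)
  else (((L + 1) / (L' + 1)) * (L' / (L' + 1) - L / (L + 1))) * (L' / (L' + 1)) ^ (k - 1)

section Main
variable {V E : Type} [Fintype V] [Fintype E] [DecidableEq V] {Q : ℕ}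
variable {fste snde : E → V} {perm : E → Equiv.Perm (Fin Q)}

set_option maxHeartbeats 2000000 in
lemma phi_mono (hne : ∀ e, fste e ≠ snde e) (hdeg : ∀ v, 0 < mdeg fste snde v)
    (hQ : 0 < Q) {L L' : ℝ} (hL : 1 ≤ L) (hLL' : L ≤ L') (p₀ : V × Fin Q) :
    ∑ v : V, ⨆ b : Fin Q, ugPr fste snde perm L' p₀ (v, b)
      ≤ ∑ v : V, ⨆ b : Fin Q, ugPr fste snde perm L p₀ (v, b) := by
  haveI : Nonempty (Fin Q) := ⟨⟨0, hQ⟩⟩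
  have hL' : 1 ≤ L' := hL.trans hLL'
  have h0 : (0 : ℝ) < L + 1 := by linarith
  have h0' : (0 : ℝ) < L' + 1 := by linarith
  have hlam0 : 0 ≤ L / (L + 1) := by positivity
  have hlam1 : L / (L + 1) < 1 := by rw [div_lt_one h0]; linarith
  have hlam0' : 0 ≤ L' / (L' + 1) := by positivity
  have hlam1' : L' / (L' + 1) < 1 := by rw [div_lt_one h0']; linarith
  have hsub : 0 ≤ L' / (L' + 1) - L / (L + 1) := by
    rw [sub_nonneg, div_le_div_iff₀ h0 h0']; nlinarith
  -- the coefficients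
  have hc0 : ∀ k, 0 ≤ cSeq L L' k := by
    intro k
    unfold cSeq
    split
    · positivity
    · refine mul_nonneg (mul_nonneg (by positivity) hsub) (pow_nonneg hlam0' _)
  have hcshift : (fun n => cSeq L L' (n + 1)) = fun n =>
      (((L + 1) / (L' + 1)) * (L' / (L' + 1) - L / (L + 1))) * (L' / (L' + 1)) ^ n := by
    funext n; simp [cSeq]
  have hcsum : Summable (cSeq L L') := by
    apply (summable_nat_add_iff 1).mp
    rw [hcshift]
    exact (summable_geometric_of_lt_one hlam0' hlam1').mul_left _
  have hctsum : ∑' k, cSeq L L' k = 1 := by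
    rw [Summable.tsum_eq_zero_add hcsum]
    have : ∑' n : ℕ, cSeq L L' (n + 1)
        = (((L + 1) / (L' + 1)) * (L' / (L' + 1) - L / (L + 1))) * (1 - L' / (L' + 1))⁻¹ := by
      rw [hcshift, tsum_mul_left, tsum_geometric_of_lt_one hlam0' hlam1']
    rw [this]
    have h1m : 1 - L' / (L' + 1) = 1 / (L' + 1) := by field_simp; ring
    rw [h1m]
    simp only [cSeq, if_pos rfl, ↓reduceIte]
    field_simp
    ring
  -- row vector at scale L and its walk iterates
  set ρ : V × Fin Q → ℝ := fun q => ugPr fste snde perm L p₀ q with hρdef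
  set ν : ℕ → (V × Fin Q) → ℝ :=
    fun k q => ∑ r : V × Fin Q, ρ r * (ugWalk fste snde perm ^ k) r q with hνdef
  have hρ0 : ∀ q, 0 ≤ ρ q := fun q => pr_nonneg hL p₀ q
  have hρ1 : ∑ r : V × Fin Q, ρ r = 1 := pr_rowsum hne hdeg hL p₀
  have hν0 : ∀ k q, 0 ≤ ν k q := fun k q =>
    Finset.sum_nonneg fun r _ => mul_nonneg (hρ0 r) (ugWalk_pow_nonneg k r q)
  have hν1 : ∀ k q, ν k q ≤ 1 := by
    intro k q
    calc ν k q ≤ ∑ r : V × Fin Q, ρ r * 1 :=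
          Finset.sum_le_sum fun r _ =>
            mul_le_mul_of_nonneg_left (ugWalk_pow_le_one hne hdeg k r q) (hρ0 r)
      _ = 1 := by simp [hρ1]
  have hν_zero : ∀ q, ν 0 q = ρ q := by
    intro q
    simp only [hνdef, pow_zero, Matrix.one_apply, mul_ite, mul_one, mul_zero,
      Finset.sum_ite_eq', Finset.mem_univ, if_true]
  have hν_succ : ∀ k q, ν (k + 1) q
      = ∑ r : V × Fin Q, ν k r * ugWalk fste snde perm r q := by
    intro k q
    simp only [hνdef, pow_succ, Matrix.mul_apply, Finset.mul_sum, Finset.sum_mul]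
    rw [Finset.sum_comm]
    exact Finset.sum_congr rfl fun r' _ => Finset.sum_congr rfl fun r _ =>
      (mul_assoc _ _ _).symm
  have hbdd : ∀ (f : Fin Q → ℝ), BddAbove (Set.range f) := fun f =>
    Set.Finite.bddAbove (Set.finite_range f)
  have hΦν : ∀ k, (∑ v : V, ⨆ b : Fin Q, ν k (v, b))
      ≤ ∑ v : V, ⨆ b : Fin Q, ρ (v, b) := by
    intro k
    induction k with
    | zero => simp only [hν_zero]; exact le_refl _
    | succ k ih =>
        calc ∑ v : V, ⨆ b : Fin Q, ν (k + 1) (v, b)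
            = ∑ v : V, ⨆ b : Fin Q,
                ∑ r : V × Fin Q, ν k r * ugWalk fste snde perm r (v, b) := by
              simp only [hν_succ]
          _ ≤ ∑ v : V, ⨆ b : Fin Q, ν k (v, b) := phi_step hne hdeg hQ (ν k) (hν0 k)
          _ ≤ _ := ih
  -- `ν k` as a geometric series
  have hterm_nn : ∀ (k : ℕ) (q r : V × Fin Q) (t : ℕ),
      0 ≤ (1 / (L + 1)) * (L / (L + 1)) ^ t * (ugWalk fste snde perm ^ t) p₀ r
        * (ugWalk fste snde perm ^ k) r q := by
    intro k q r t
    have h1 := ugWalk_pow_nonneg (fste := fste) (snde := snde) (perm := perm) t p₀ r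
    have h2 := ugWalk_pow_nonneg (fste := fste) (snde := snde) (perm := perm) k r q
    positivity
  have hterm_sum : ∀ (k : ℕ) (q r : V × Fin Q),
      Summable fun t : ℕ =>
        (1 / (L + 1)) * (L / (L + 1)) ^ t * (ugWalk fste snde perm ^ t) p₀ r
          * (ugWalk fste snde perm ^ k) r q := by
    intro k q r
    refine Summable.of_nonneg_of_le (hterm_nn k q r) (fun t => ?_)
      ((summable_geometric_of_lt_one hlam0 hlam1).mul_left (1 / (L + 1)))
    have h1 := ugWalk_pow_le_one (perm := perm) hne hdeg t p₀ r
    have h2 := ugWalk_pow_le_one (perm := perm) hne hdeg k r q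
    have h1' := ugWalk_pow_nonneg (fste := fste) (snde := snde) (perm := perm) t p₀ r
    have h2' := ugWalk_pow_nonneg (fste := fste) (snde := snde) (perm := perm) k r q
    calc (1 / (L + 1)) * (L / (L + 1)) ^ t * (ugWalk fste snde perm ^ t) p₀ r
          * (ugWalk fste snde perm ^ k) r q
        ≤ (1 / (L + 1)) * (L / (L + 1)) ^ t * 1 * 1 := by gcongr <;> positivity
      _ = (1 / (L + 1)) * (L / (L + 1)) ^ t := by ring
  have hν_tsum : ∀ k q, ν k q = ∑' t : ℕ,
      (1 / (L + 1)) * (L / (L + 1)) ^ t * (ugWalk fste snde perm ^ (t + k)) p₀ q := by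
    intro k q
    have hterm : ∀ r : V × Fin Q, ρ r * (ugWalk fste snde perm ^ k) r q
        = ∑' t : ℕ, (1 / (L + 1)) * (L / (L + 1)) ^ t * (ugWalk fste snde perm ^ t) p₀ r
            * (ugWalk fste snde perm ^ k) r q := by
      intro r
      rw [hρdef]
      unfold ugPr
      rw [tsum_mul_right]
    calc ν k q = ∑ r : V × Fin Q, ρ r * (ugWalk fste snde perm ^ k) r q := rfl
      _ = ∑ r : V × Fin Q, ∑' t : ℕ,
            (1 / (L + 1)) * (L / (L + 1)) ^ t * (ugWalk fste snde perm ^ t) p₀ r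
              * (ugWalk fste snde perm ^ k) r q :=
          Finset.sum_congr rfl fun r _ => hterm r
      _ = ∑' t : ℕ, ∑ r : V × Fin Q,
            (1 / (L + 1)) * (L / (L + 1)) ^ t * (ugWalk fste snde perm ^ t) p₀ r
              * (ugWalk fste snde perm ^ k) r q :=
          (Summable.tsum_finsetSum fun r _ => hterm_sum k q r).symm
      _ = ∑' t : ℕ,
            (1 / (L + 1)) * (L / (L + 1)) ^ t * (ugWalk fste snde perm ^ (t + k)) p₀ q := by
          refine tsum_congr fun t => ?_
          rw [pow_add, Matrix.mul_apply, Finset.mul_sum]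
          exact Finset.sum_congr rfl fun r _ => mul_assoc _ _ _
  -- the convex-combination identity
  have key2 : ∀ q : V × Fin Q, ugPr fste snde perm L' p₀ q
      = ∑' k : ℕ, cSeq L L' k * ν k q := by
    intro q
    set F : ℕ × ℕ → ℝ := fun kt => cSeq L L' kt.1 *
      ((1 / (L + 1)) * (L / (L + 1)) ^ kt.2
        * (ugWalk fste snde perm ^ (kt.2 + kt.1)) p₀ q) with hF
    have hFnn : ∀ kt, 0 ≤ F kt := by
      intro kt
      have h1 := ugWalk_pow_nonneg (fste := fste) (snde := snde) (perm := perm)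
        (kt.2 + kt.1) p₀ q
      exact mul_nonneg (hc0 kt.1) (by positivity)
    have hGsum : Summable (fun kt : ℕ × ℕ =>
        cSeq L L' kt.1 * ((1 / (L + 1)) * (L / (L + 1)) ^ kt.2)) := by
      apply summable_mul_of_summable_norm
        (f := cSeq L L') (g := fun t : ℕ => (1 / (L + 1)) * (L / (L + 1)) ^ t)
      · have : (fun k => ‖cSeq L L' k‖) = cSeq L L' :=
          funext fun k => Real.norm_of_nonneg (hc0 k)
        rw [this]; exact hcsum
      · have : (fun t : ℕ => ‖(1 / (L + 1)) * (L / (L + 1)) ^ t‖)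
            = fun t : ℕ => (1 / (L + 1)) * (L / (L + 1)) ^ t :=
          funext fun t => Real.norm_of_nonneg (by positivity)
        rw [this]
        exact (summable_geometric_of_lt_one hlam0 hlam1).mul_left _
    have hFsum : Summable F := by
      refine Summable.of_nonneg_of_le hFnn (fun kt => ?_) hGsum
      have h1 := ugWalk_pow_le_one (perm := perm) hne hdeg (kt.2 + kt.1) p₀ q
      have h2 := ugWalk_pow_nonneg (fste := fste) (snde := snde) (perm := perm)
        (kt.2 + kt.1) p₀ q
      refine mul_le_mul_of_nonneg_left ?_ (hc0 kt.1)
      calc (1 / (L + 1)) * (L / (L + 1)) ^ kt.2 * (ugWalk fste snde perm ^ (kt.2 + kt.1)) p₀ q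
          ≤ (1 / (L + 1)) * (L / (L + 1)) ^ kt.2 * 1 := by gcongr <;> positivity
        _ = (1 / (L + 1)) * (L / (L + 1)) ^ kt.2 := mul_one _
    have coeff : ∀ n : ℕ, ∑ kl ∈ Finset.HasAntidiagonal.antidiagonal n,
        cSeq L L' kl.1 * ((1 / (L + 1)) * (L / (L + 1)) ^ kl.2)
        = (1 / (L' + 1)) * (L' / (L' + 1)) ^ n := by
      intro n
      rw [Finset.Nat.sum_antidiagonal_eq_sum_range_succ_mk, Finset.sum_range_succ']
      have hf0 : cSeq L L' 0 * ((1 / (L + 1)) * (L / (L + 1)) ^ (n - 0))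
          = (1 / (L' + 1)) * (L / (L + 1)) ^ n := by
        simp only [cSeq, if_pos rfl, ↓reduceIte, Nat.sub_zero]
        field_simp
      have hfi : ∀ i ∈ Finset.range n,
          cSeq L L' (i + 1) * ((1 / (L + 1)) * (L / (L + 1)) ^ (n - (i + 1)))
          = ((1 / (L' + 1)) * (L' / (L' + 1) - L / (L + 1)))
            * ((L' / (L' + 1)) ^ i * (L / (L + 1)) ^ (n - 1 - i)) := by
        intro i _
        have hni : n - (i + 1) = n - 1 - i := by omega
        simp only [cSeq, Nat.succ_ne_zero, if_false, Nat.add_sub_cancel, hni]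
        field_simp
        try ring
      rw [Finset.sum_congr rfl hfi, hf0, ← Finset.mul_sum]
      have hgeo : (∑ i ∈ Finset.range n, (L' / (L' + 1)) ^ i * (L / (L + 1)) ^ (n - 1 - i))
          * (L' / (L' + 1) - L / (L + 1))
          = (L' / (L' + 1)) ^ n - (L / (L + 1)) ^ n := geom_sum₂_mul _ _ n
      have expand : ((1 / (L' + 1)) * (L' / (L' + 1) - L / (L + 1)))
          * (∑ i ∈ Finset.range n, (L' / (L' + 1)) ^ i * (L / (L + 1)) ^ (n - 1 - i))
          = (1 / (L' + 1)) * ((∑ i ∈ Finset.range n,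
              (L' / (L' + 1)) ^ i * (L / (L + 1)) ^ (n - 1 - i))
            * (L' / (L' + 1) - L / (L + 1))) := by ring
      rw [expand, hgeo]
      ring
    calc ugPr fste snde perm L' p₀ q
        = ∑' n : ℕ, (1 / (L' + 1)) * (L' / (L' + 1)) ^ n
            * (ugWalk fste snde perm ^ n) p₀ q := rfl
      _ = ∑' n : ℕ, ∑ kl ∈ Finset.HasAntidiagonal.antidiagonal n, F kl := by
          refine tsum_congr fun n => ?_
          have : ∑ kl ∈ Finset.HasAntidiagonal.antidiagonal n, F kl
              = (∑ kl ∈ Finset.HasAntidiagonal.antidiagonal n,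
                  cSeq L L' kl.1 * ((1 / (L + 1)) * (L / (L + 1)) ^ kl.2))
                * (ugWalk fste snde perm ^ n) p₀ q := by
            rw [Finset.sum_mul]
            refine Finset.sum_congr rfl fun kl hkl => ?_
            have hn : kl.2 + kl.1 = n := by
              have := Finset.HasAntidiagonal.mem_antidiagonal.mp hkl; omega
            rw [hF]
            dsimp only
            rw [hn]
            ring
          rw [this, coeff n]
      _ = ∑' x : Σ n : ℕ, Finset.HasAntidiagonal.antidiagonal n,
            F (Finset.HasAntidiagonal.sigmaAntidiagonalEquivProd x) := by
          rw [Summable.tsum_sigma (f := fun x : Σ n : ℕ, Finset.HasAntidiagonal.antidiagonal n =>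
            F (Finset.HasAntidiagonal.sigmaAntidiagonalEquivProd x))
            (Finset.HasAntidiagonal.sigmaAntidiagonalEquivProd.summable_iff.mpr hFsum)]
          exact tsum_congr fun n => (Finset.tsum_subtype (Finset.HasAntidiagonal.antidiagonal n) F).symm
      _ = ∑' kt : ℕ × ℕ, F kt := Finset.HasAntidiagonal.sigmaAntidiagonalEquivProd.tsum_eq F
      _ = ∑' k : ℕ, ∑' t : ℕ, F (k, t) := Summable.tsum_prod hFsum
      _ = ∑' k : ℕ, cSeq L L' k * ν k q := by
          refine tsum_congr fun k => ?_
          rw [hν_tsum k q, ← tsum_mul_left]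
  -- assembling the inequality
  have hsum1 : ∀ (v : V) (b : Fin Q), Summable fun k => cSeq L L' k * ν k (v, b) := by
    intro v b
    refine Summable.of_nonneg_of_le (fun k => mul_nonneg (hc0 k) (hν0 k (v, b)))
      (fun k => ?_) (hcsum.mul_right 1)
    exact mul_le_mul_of_nonneg_left (hν1 k (v, b)) (hc0 k)
  have hSk1 : ∀ k v, (⨆ b : Fin Q, ν k (v, b)) ≤ 1 := fun k v =>
    ciSup_le fun b => hν1 k (v, b)
  have hSk0 : ∀ k v, 0 ≤ ⨆ b : Fin Q, ν k (v, b) := fun k v =>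
    le_trans (hν0 k (v, Classical.arbitrary _))
      (le_ciSup (f := fun b => ν k (v, b)) (hbdd _) _)
  have hsum2 : ∀ v : V, Summable fun k => cSeq L L' k * ⨆ b : Fin Q, ν k (v, b) := by
    intro v
    refine Summable.of_nonneg_of_le (fun k => mul_nonneg (hc0 k) (hSk0 k v))
      (fun k => ?_) (hcsum.mul_right 1)
    exact mul_le_mul_of_nonneg_left (hSk1 k v) (hc0 k)
  have hstep : ∀ v : V, (⨆ b : Fin Q, ugPr fste snde perm L' p₀ (v, b))
      ≤ ∑' k : ℕ, cSeq L L' k * ⨆ b : Fin Q, ν k (v, b) := by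
    intro v
    refine ciSup_le fun b => ?_
    rw [key2 (v, b)]
    exact Summable.tsum_le_tsum
      (fun k => mul_le_mul_of_nonneg_left
        (le_ciSup (f := fun b => ν k (v, b)) (hbdd _) b) (hc0 k))
      (hsum1 v b) (hsum2 v)
  have hΦρ0 : 0 ≤ ∑ v : V, ⨆ b : Fin Q, ρ (v, b) :=
    Finset.sum_nonneg fun v _ =>
      le_trans (hρ0 (v, Classical.arbitrary _))
        (le_ciSup (f := fun b => ρ (v, b)) (hbdd _) _)
  have hsum3 : Summable fun k => cSeq L L' k * ∑ v : V, ⨆ b : Fin Q, ν k (v, b) := by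
    refine Summable.of_nonneg_of_le
      (fun k => mul_nonneg (hc0 k) (Finset.sum_nonneg fun v _ => hSk0 k v))
      (fun k => ?_) (hcsum.mul_right (Fintype.card V : ℝ))
    refine mul_le_mul_of_nonneg_left ?_ (hc0 k)
    calc ∑ v : V, ⨆ b : Fin Q, ν k (v, b) ≤ ∑ _v : V, (1 : ℝ) :=
          Finset.sum_le_sum fun v _ => hSk1 k v
      _ = (Fintype.card V : ℝ) := by simp
  calc ∑ v : V, ⨆ b : Fin Q, ugPr fste snde perm L' p₀ (v, b)
      ≤ ∑ v : V, ∑' k : ℕ, cSeq L L' k * ⨆ b : Fin Q, ν k (v, b) :=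
        Finset.sum_le_sum fun v _ => hstep v
    _ = ∑' k : ℕ, ∑ v : V, cSeq L L' k * ⨆ b : Fin Q, ν k (v, b) :=
        (Summable.tsum_finsetSum fun v _ => hsum2 v).symm
    _ = ∑' k : ℕ, cSeq L L' k * ∑ v : V, ⨆ b : Fin Q, ν k (v, b) :=
        tsum_congr fun k => (Finset.mul_sum _ _ _).symm
    _ ≤ ∑' k : ℕ, cSeq L L' k * ∑ v : V, ⨆ b : Fin Q, ρ (v, b) :=
        Summable.tsum_le_tsum
          (fun k => mul_le_mul_of_nonneg_left (hΦν k) (hc0 k))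
          hsum3 (hcsum.mul_right _)
    _ = (∑' k : ℕ, cSeq L L' k) * ∑ v : V, ⨆ b : Fin Q, ρ (v, b) := tsum_mul_right
    _ = ∑ v : V, ⨆ b : Fin Q, ugPr fste snde perm L p₀ (v, b) := by
        rw [hctsum, one_mul]


lemma amb_eq (hne : ∀ e, fste e ≠ snde e) (hdeg : ∀ v, 0 < mdeg fste snde v)
    {L : ℝ} (hL : 1 ≤ L) (s : V) (a : Fin Q) :
    ugAmb fste snde perm L s a
      = 1 - ∑ v : V, ⨆ b : Fin Q, ugPr fste snde perm L (s, a) (v, b) := by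
  unfold ugAmb
  rw [Finset.sum_sub_distrib]
  congr 1
  rw [← Fintype.sum_prod_type]
  exact pr_rowsum hne hdeg hL (s, a)

end Main

/-- Monotonicity of ambiguity in the geometric scale: for `1 ≤ L ≤ L'`,
`Amb_{L'}(s,a) ≥ Amb_L(s,a)` for every seed and seed label, and hence
`μ^{UG}_{L'}(s) ≥ μ^{UG}_L(s)`. -/
theorem stmt14 (Q : ℕ) (V E : Type) [Fintype V] [Fintype E] [DecidableEq V]
    (fste snde : E → V) (perm : E → Equiv.Perm (Fin Q))
    (hne : ∀ e, fste e ≠ snde e)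
    (hdeg : ∀ v, 0 < mdeg fste snde v)
    (L L' : ℝ) (hL : 1 ≤ L) (hLL' : L ≤ L') :
    (∀ (s : V) (a : Fin Q),
        ugAmb fste snde perm L s a ≤ ugAmb fste snde perm L' s a) ∧
    ∀ s : V, ugMu fste snde perm L s ≤ ugMu fste snde perm L' s := by
  have hL' : 1 ≤ L' := hL.trans hLL'
  have hamb : ∀ (s : V) (a : Fin Q),
      ugAmb fste snde perm L s a ≤ ugAmb fste snde perm L' s a := by
    intro s a
    have hQ : 0 < Q := a.pos
    rw [amb_eq hne hdeg hL s a, amb_eq hne hdeg hL' s a]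
    have := phi_mono (perm := perm) hne hdeg hQ hL hLL' (s, a)
    linarith
  refine ⟨hamb, fun s => ?_⟩
  rcases Nat.eq_zero_or_pos Q with h | hQ
  · subst h
    unfold ugMu
    rw [Real.iInf_of_isEmpty, Real.iInf_of_isEmpty]
  · haveI : Nonempty (Fin Q) := ⟨⟨0, hQ⟩⟩
    unfold ugMu
    exact ciInf_mono (Set.Finite.bddBelow (Set.finite_range _)) (hamb s)
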